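/- Define the grid points x_k = -b + 2bk/N for 0 ≤ k < N. If f: ℝ → ℝ is odd (f(-x) = -f(x)) and 2b-periodic (f(x+2b) = f(x)), and the coefficients a_j for 1 ≤ j ≤ M-1 are defined by a_j = (2/N) Σ_{k=1}^{N-1} (-1)^j f(x_k) sin(2πjk/N), then the trigonometric polynomial f_M(x) = Σ_{j=1}^{M-1} a_j sin(jπx/b) interpolates f at all grid points: f_M(x_k) = f(x_k) for every 0 ≤ k < N. -/

import Mathlib

open Finset Real


/-- value of `∑_{j=1}^{M-1} cos (π j d / M)` -/
noncomputable def dstC (M : ℕ) (d : ℤ) : ℝ :=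
  if (2 * (M : ℤ)) ∣ d then (M : ℝ) - 1 else if (2 : ℤ) ∣ d then -1 else 0

lemma int_eq_zero_of_dvd_bounds {n d : ℤ} (h : n ∣ d) (h1 : -n < d) (h2 : d < n) : d = 0 :=
  Int.eq_zero_of_abs_lt_dvd h (abs_lt.mpr ⟨h1, h2⟩)

lemma dst_cos_sum (M : ℕ) (hM : 1 ≤ M) (m : ℤ) :
    ∑ j ∈ Finset.Ico 1 M, Real.cos (Real.pi * (j : ℝ) * (m : ℝ) / (M : ℝ)) = dstC M m := by
  have hM0 : (M : ℝ) ≠ 0 := Nat.cast_ne_zero.mpr (by omega)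
  unfold dstC
  by_cases h2M : (2 * (M : ℤ)) ∣ m
  · obtain ⟨t, rfl⟩ := h2M
    rw [if_pos (Dvd.intro t rfl)]
    have h1 : ∀ j ∈ Finset.Ico 1 M,
        Real.cos (Real.pi * (j : ℝ) * ((2 * (M : ℤ) * t : ℤ) : ℝ) / (M : ℝ)) = 1 := by
      intro j _
      have harg : Real.pi * (j : ℝ) * ((2 * (M : ℤ) * t : ℤ) : ℝ) / (M : ℝ)
          = ((j * t : ℤ) : ℝ) * (2 * Real.pi) := by
        push_cast
        field_simp
      rw [harg, Real.cos_int_mul_two_pi]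
    rw [Finset.sum_congr rfl h1, Finset.sum_const, Nat.card_Ico, nsmul_eq_mul, mul_one,
      Nat.cast_sub hM, Nat.cast_one]
  · rw [if_neg h2M]
    set c : ℝ := Real.pi * (m : ℝ) / (2 * (M : ℝ)) with hc
    have hsc : Real.sin c ≠ 0 := by
      intro h
      obtain ⟨n, hn⟩ := Real.sin_eq_zero_iff.mp h
      apply h2M
      refine ⟨n, ?_⟩
      have hpi := Real.pi_ne_zero
      have hr : (m : ℝ) = 2 * (M : ℝ) * (n : ℝ) := by
        rw [hc] at hn
        field_simp at hn
        have h' : Real.pi * (m : ℝ) = Real.pi * (2 * (M : ℝ) * (n : ℝ)) := by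
          linear_combination -Real.pi * hn
        exact (mul_left_cancel₀ hpi h').symm ▸ rfl
      exact_mod_cast hr
    have key : (∑ j ∈ Finset.Ico 1 M, Real.cos (Real.pi * (j : ℝ) * (m : ℝ) / (M : ℝ)))
          * (2 * Real.sin c)
        = Real.sin ((2 * (M : ℝ) - 1) * c) - Real.sin c := by
      rw [Finset.sum_mul, Finset.sum_Ico_eq_sum_range]
      have h2 : ∀ i ∈ Finset.range (M - 1),
          Real.cos (Real.pi * ((1 + i : ℕ) : ℝ) * (m : ℝ) / (M : ℝ)) * (2 * Real.sin c)
            = (fun i : ℕ => Real.sin ((2 * (i : ℝ) + 1) * c)) (i + 1)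
              - (fun i : ℕ => Real.sin ((2 * (i : ℝ) + 1) * c)) i := by
        intro i _
        simp only
        have e1 : Real.pi * ((1 + i : ℕ) : ℝ) * (m : ℝ) / (M : ℝ) = (2 * ((i : ℝ) + 1)) * c := by
          rw [hc]; push_cast; field_simp; ring
        have e2 : (2 * ((i + 1 : ℕ) : ℝ) + 1) * c = (2 * ((i : ℝ) + 1)) * c + c := by
          push_cast; ring
        have e3 : (2 * (i : ℝ) + 1) * c = (2 * ((i : ℝ) + 1)) * c - c := by ring
        rw [e1, e2, e3, Real.sin_add, Real.sin_sub]
        ring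
      rw [Finset.sum_congr rfl h2,
        Finset.sum_range_sub (fun i : ℕ => Real.sin ((2 * (i : ℝ) + 1) * c)) (M - 1)]
      have e4 : (2 * (((M - 1 : ℕ)) : ℝ) + 1) = 2 * (M : ℝ) - 1 := by
        rw [Nat.cast_sub hM]; push_cast; ring
      rw [e4]
      norm_num
    have e5 : (2 * (M : ℝ) - 1) * c = (m : ℝ) * Real.pi - c := by
      rw [hc]; field_simp
    have hcm : Real.cos ((m : ℝ) * Real.pi) = (-1 : ℝ) ^ m := by
      simpa using Real.cos_int_mul_pi_sub 0 m
    rw [e5, Real.sin_sub, Real.sin_int_mul_pi, hcm] at key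
    have hS : (∑ j ∈ Finset.Ico 1 M, Real.cos (Real.pi * (j : ℝ) * (m : ℝ) / (M : ℝ)))
        = (-((-1 : ℝ) ^ m) - 1) / 2 := by
      have h2s : (2 * Real.sin c) ≠ 0 := mul_ne_zero two_ne_zero hsc
      apply mul_right_cancel₀ h2s
      rw [key]; ring
    rw [hS]
    rcases Int.even_or_odd m with he | ho
    · rw [if_pos he.two_dvd, Even.neg_one_zpow he]
      norm_num
    · rw [if_neg (by obtain ⟨t, rfl⟩ := ho; omega), Odd.neg_one_zpow ho]
      norm_num

lemma dstC_def (M : ℕ) (d : ℤ) : dstC M d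
  = if (2 * (M : ℤ)) ∣ d then (M : ℝ) - 1 else if (2 : ℤ) ∣ d then -1 else 0 := rfl

lemma sin_mul_sin_eq (x y : ℝ) :
    Real.sin x * Real.sin y = (Real.cos (x - y) - Real.cos (x + y)) / 2 := by
  rw [Real.cos_sub, Real.cos_add]; ring

lemma dst_key (M : ℕ) (hM : 2 ≤ M) (b : ℝ) (hb : 0 < b)
    (f : ℝ → ℝ) (hodd : ∀ x : ℝ, f (-x) = -f x) (hper : ∀ x : ℝ, f (x + 2 * b) = f x)
    (l : ℕ) (hl : l < 2 * M) :
    ∑ k ∈ Finset.Ico 1 (2 * M), f (-b + 2 * b * (k : ℝ) / (2 * (M : ℝ))) *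
        ∑ j ∈ Finset.Ico 1 M,
          Real.sin (Real.pi * (j : ℝ) * (k : ℝ) / (M : ℝ)) *
            Real.sin (Real.pi * (j : ℝ) * (l : ℝ) / (M : ℝ))
      = (M : ℝ) * f (-b + 2 * b * (l : ℝ) / (2 * (M : ℝ))) := by
  have hM0 : (M : ℝ) ≠ 0 := Nat.cast_ne_zero.mpr (by omega)
  have hb0 : b ≠ 0 := ne_of_gt hb
  -- f vanishes at -b and 0
  have fb : f (-b) = 0 := by
    have h1 : f b = f (-b) := by
      have := hper (-b)
      rw [show -b + 2 * b = b by ring] at this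
      exact this
    have h2 : f (-b) = -f b := hodd b
    linarith
  have f0 : f 0 = 0 := by
    have := hodd 0
    simp at this
    linarith
  -- symmetry of f at grid points
  have fsym : ∀ k : ℕ, k ≤ 2 * M →
      f (-b + 2 * b * (2 * (M : ℝ) - (k : ℝ)) / (2 * (M : ℝ)))
        = -f (-b + 2 * b * (k : ℝ) / (2 * (M : ℝ))) := by
    intro k hk
    have e : -b + 2 * b * (2 * (M : ℝ) - (k : ℝ)) / (2 * (M : ℝ))
        = -(-b + 2 * b * (k : ℝ) / (2 * (M : ℝ))) := by
      field_simp; ring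
    rw [e, hodd]
  -- rewrite the inner sum via dstC
  have hD : ∀ k : ℕ,
      (∑ j ∈ Finset.Ico 1 M,
          Real.sin (Real.pi * (j : ℝ) * (k : ℝ) / (M : ℝ)) *
            Real.sin (Real.pi * (j : ℝ) * (l : ℝ) / (M : ℝ)))
        = (dstC M ((k : ℤ) - (l : ℤ)) - dstC M ((k : ℤ) + (l : ℤ))) / 2 := by
    intro k
    have h1 : ∀ j ∈ Finset.Ico 1 M,
        Real.sin (Real.pi * (j : ℝ) * (k : ℝ) / (M : ℝ)) *
            Real.sin (Real.pi * (j : ℝ) * (l : ℝ) / (M : ℝ))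
          = (Real.cos (Real.pi * (j : ℝ) * (((k : ℤ) - (l : ℤ) : ℤ) : ℝ) / (M : ℝ))
            - Real.cos (Real.pi * (j : ℝ) * (((k : ℤ) + (l : ℤ) : ℤ) : ℝ) / (M : ℝ))) / 2 := by
      intro j _
      rw [sin_mul_sin_eq]
      congr 2
      · push_cast; ring
      · push_cast; ring
    rw [Finset.sum_congr rfl h1, ← Finset.sum_div, Finset.sum_sub_distrib,
      dst_cos_sum M (by omega), dst_cos_sum M (by omega)]
  have hsum : ∀ k ∈ Finset.Ico 1 (2 * M), f (-b + 2 * b * (k : ℝ) / (2 * (M : ℝ))) *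
        (∑ j ∈ Finset.Ico 1 M,
          Real.sin (Real.pi * (j : ℝ) * (k : ℝ) / (M : ℝ)) *
            Real.sin (Real.pi * (j : ℝ) * (l : ℝ) / (M : ℝ)))
      = f (-b + 2 * b * (k : ℝ) / (2 * (M : ℝ))) *
        ((dstC M ((k : ℤ) - (l : ℤ)) - dstC M ((k : ℤ) + (l : ℤ))) / 2) := by
    intro k _
    rw [hD k]
  rw [Finset.sum_congr rfl hsum]
  rcases Nat.eq_zero_or_pos l with hl0 | hl1
  · subst hl0
    rw [Finset.sum_eq_zero, show ((0:ℕ):ℝ) = 0 by norm_num]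
    · rw [show -b + 2 * b * (0:ℝ) / (2 * (M : ℝ)) = -b by ring, fb, mul_zero]
    · intro k _
      norm_num
  · -- l ≥ 1 : reduce to the pair {l, 2M - l}
    have hpair : ({l, 2 * M - l} : Finset ℕ) ⊆ Finset.Ico 1 (2 * M) := by
      intro x hx
      simp only [Finset.mem_insert, Finset.mem_singleton] at hx
      rw [Finset.mem_Ico]
      rcases hx with rfl | rfl <;> omega
    rw [← Finset.sum_subset hpair ?_]
    · by_cases hlM : l = M
      · rw [hlM]
        rw [show 2 * M - M = M by omega, Finset.pair_eq_singleton, Finset.sum_singleton]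
        have e1 : dstC M ((M : ℤ) - (M : ℤ)) = dstC M ((M : ℤ) + (M : ℤ)) := by
          rw [dstC_def, dstC_def, if_pos (show (2*(M:ℤ)) ∣ ((M:ℤ)-(M:ℤ)) by simp),
            if_pos (show (2*(M:ℤ)) ∣ ((M:ℤ)+(M:ℤ)) from ⟨1, by ring⟩)]
        rw [e1, sub_self, zero_div, mul_zero]
        have e2 : -b + 2 * b * (M : ℝ) / (2 * (M : ℝ)) = 0 := by field_simp; ring
        rw [e2, f0, mul_zero]
      · have hne : l ≠ 2 * M - l := by omega
        rw [Finset.sum_pair hne]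
        have hc1 : dstC M ((l : ℤ) - (l : ℤ)) = (M : ℝ) - 1 := by
          rw [dstC_def, if_pos (by simp)]
        have hc2 : dstC M ((l : ℤ) + (l : ℤ)) = -1 := by
          rw [dstC_def, if_neg, if_pos ⟨l, by ring⟩]
          intro h
          have h' : (2 * (M : ℤ)) ∣ ((l : ℤ) + (l : ℤ) - 2 * (M : ℤ)) := dvd_sub h dvd_rfl
          have := int_eq_zero_of_dvd_bounds h' (by push_cast; omega) (by push_cast; omega)
          omega
        have hcast : ((2 * M - l : ℕ) : ℤ) = 2 * (M : ℤ) - (l : ℤ) := by omega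
        have hc3 : dstC M (((2 * M - l : ℕ) : ℤ) - (l : ℤ)) = -1 := by
          rw [hcast, dstC_def, if_neg, if_pos ⟨(M : ℤ) - l, by ring⟩]
          intro h
          have := int_eq_zero_of_dvd_bounds h (by push_cast; omega) (by push_cast; omega)
          omega
        have hc4 : dstC M (((2 * M - l : ℕ) : ℤ) + (l : ℤ)) = (M : ℝ) - 1 := by
          rw [hcast, dstC_def, if_pos ⟨1, by ring⟩]
        rw [hc1, hc2, hc3, hc4]
        have hcastR : ((2 * M - l : ℕ) : ℝ) = 2 * (M : ℝ) - (l : ℝ) := by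
          rw [Nat.cast_sub (le_of_lt hl)]; push_cast; ring
        rw [hcastR, fsym l (le_of_lt hl)]
        ring
    · intro k hk hknot
      rw [Finset.mem_Ico] at hk
      simp only [Finset.mem_insert, Finset.mem_singleton, not_or] at hknot
      obtain ⟨hkl, hkl2⟩ := hknot
      have hne1 : ¬ (2 * (M : ℤ)) ∣ ((k : ℤ) - (l : ℤ)) := by
        intro h
        have := int_eq_zero_of_dvd_bounds h (by push_cast; omega) (by push_cast; omega)
        omega
      have hne2 : ¬ (2 * (M : ℤ)) ∣ ((k : ℤ) + (l : ℤ)) := by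
        intro h
        have h' : (2 * (M : ℤ)) ∣ ((k : ℤ) + (l : ℤ) - 2 * (M : ℤ)) := dvd_sub h dvd_rfl
        have := int_eq_zero_of_dvd_bounds h' (by push_cast; omega) (by push_cast; omega)
        omega
      have hpar : ((2 : ℤ) ∣ ((k : ℤ) - (l : ℤ))) ↔ ((2 : ℤ) ∣ ((k : ℤ) + (l : ℤ))) := by
        omega
      have heq : dstC M ((k : ℤ) - (l : ℤ)) = dstC M ((k : ℤ) + (l : ℤ)) := by
        rw [dstC_def, dstC_def, if_neg hne1, if_neg hne2]
        by_cases hp : (2 : ℤ) ∣ ((k : ℤ) - (l : ℤ))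
        · rw [if_pos hp, if_pos (hpar.mp hp)]
        · rw [if_neg hp, if_neg (fun h => hp (hpar.mpr h))]
      rw [heq, sub_self, zero_div, mul_zero]

theorem stmt_0 (M : ℕ) (hM : 2 ≤ M) (b : ℝ) (hb : 0 < b)
    (f : ℝ → ℝ) (hodd : ∀ x : ℝ, f (-x) = -f x)
    (hper : ∀ x : ℝ, f (x + 2 * b) = f x)
    (a : ℕ → ℝ)
    (ha : ∀ j : ℕ, 1 ≤ j → j ≤ M - 1 →
      a j = (2 / (2 * (M : ℝ))) * ∑ k ∈ Finset.Ico 1 (2 * M),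
        (-1 : ℝ) ^ j * f (-b + 2 * b * (k : ℝ) / (2 * (M : ℝ))) *
          Real.sin (2 * Real.pi * (j : ℝ) * (k : ℝ) / (2 * (M : ℝ)))) :
    ∀ k : ℕ, k < 2 * M →
      ∑ j ∈ Finset.Ico 1 M,
          a j * Real.sin ((j : ℝ) * Real.pi * (-b + 2 * b * (k : ℝ) / (2 * (M : ℝ))) / b)
        = f (-b + 2 * b * (k : ℝ) / (2 * (M : ℝ))) := by
  intro l hl
  have hM0 : (M : ℝ) ≠ 0 := Nat.cast_ne_zero.mpr (by omega)
  have hb0 : b ≠ 0 := ne_of_gt hb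
  have step1 : ∀ j ∈ Finset.Ico 1 M,
      a j * Real.sin ((j : ℝ) * Real.pi * (-b + 2 * b * (l : ℝ) / (2 * (M : ℝ))) / b)
        = (M : ℝ)⁻¹ * ∑ k ∈ Finset.Ico 1 (2 * M),
            f (-b + 2 * b * (k : ℝ) / (2 * (M : ℝ))) *
              (Real.sin (Real.pi * (j : ℝ) * (k : ℝ) / (M : ℝ)) *
                Real.sin (Real.pi * (j : ℝ) * (l : ℝ) / (M : ℝ))) := by
    intro j hj
    obtain ⟨hj1, hj2⟩ := Finset.mem_Ico.mp hj
    rw [ha j hj1 (by omega)]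
    have hcj : Real.cos ((j : ℝ) * Real.pi) = (-1 : ℝ) ^ j := by
      simpa using Real.cos_nat_mul_pi_sub 0 j
    have hsin : Real.sin ((j : ℝ) * Real.pi * (-b + 2 * b * (l : ℝ) / (2 * (M : ℝ))) / b)
        = (-1 : ℝ) ^ j * Real.sin (Real.pi * (j : ℝ) * (l : ℝ) / (M : ℝ)) := by
      have e : (j : ℝ) * Real.pi * (-b + 2 * b * (l : ℝ) / (2 * (M : ℝ))) / b
          = Real.pi * (j : ℝ) * (l : ℝ) / (M : ℝ) - (j : ℝ) * Real.pi := by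
        field_simp; ring
      rw [e, Real.sin_sub, Real.sin_nat_mul_pi, hcj]
      ring
    rw [hsin, Finset.mul_sum, Finset.sum_mul, Finset.mul_sum]
    refine Finset.sum_congr rfl fun k _ => ?_
    have e2 : 2 * Real.pi * (j : ℝ) * (k : ℝ) / (2 * (M : ℝ))
        = Real.pi * (j : ℝ) * (k : ℝ) / (M : ℝ) := by
      field_simp
    rw [e2]
    have h11 : ((-1 : ℝ) ^ j) * ((-1 : ℝ) ^ j) = 1 := by
      rw [← mul_pow]; norm_num
    have h2M : (2 : ℝ) / (2 * (M : ℝ)) = (M : ℝ)⁻¹ := by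
      field_simp
    rw [h2M]
    linear_combination ((M : ℝ)⁻¹ * f (-b + 2 * b * (k : ℝ) / (2 * (M : ℝ)))
      * Real.sin (Real.pi * (j : ℝ) * (k : ℝ) / (M : ℝ))
      * Real.sin (Real.pi * (j : ℝ) * (l : ℝ) / (M : ℝ))) * h11
  rw [Finset.sum_congr rfl step1, ← Finset.mul_sum, Finset.sum_comm]
  have step2 : ∀ k ∈ Finset.Ico 1 (2 * M),
      (∑ j ∈ Finset.Ico 1 M, f (-b + 2 * b * (k : ℝ) / (2 * (M : ℝ))) *
        (Real.sin (Real.pi * (j : ℝ) * (k : ℝ) / (M : ℝ)) *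
          Real.sin (Real.pi * (j : ℝ) * (l : ℝ) / (M : ℝ))))
      = f (-b + 2 * b * (k : ℝ) / (2 * (M : ℝ))) *
          ∑ j ∈ Finset.Ico 1 M,
            Real.sin (Real.pi * (j : ℝ) * (k : ℝ) / (M : ℝ)) *
              Real.sin (Real.pi * (j : ℝ) * (l : ℝ) / (M : ℝ)) :=
    fun k _ => (Finset.mul_sum _ _ _).symm
  rw [Finset.sum_congr rfl step2, dst_key M hM b hb f hodd hper l hl,
    inv_mul_cancel_left₀ hM0]
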